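/- Let H, J be Hermitian matrices with ‖D‖, ‖J‖ ≤ 1 and δ > 0 with δ ≤ 1. Then ‖e^{−i(D+J)δ} − e^{−iDδ}e^{−iJδ}‖ ≤ δ², where ‖·‖ is the operator norm. -/

import Mathlib

open scoped ComplexOrder Matrix

/-- The trace norm `‖A‖₁ = Tr √(AᴴA)` of a complex square matrix. -/
noncomputable def traceNorm {n : Type*} [Fintype n] [DecidableEq n]
    (A : Matrix n n ℂ) : ℝ :=
  (((Matrix.posSemidef_conjTranspose_mul_self A).1.eigenvectorUnitary : Matrix n n ℂ) *
      Matrix.diagonal (((↑) : ℝ → ℂ) ∘ (√·) ∘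
        (Matrix.posSemidef_conjTranspose_mul_self A).1.eigenvalues) *
      (star (Matrix.posSemidef_conjTranspose_mul_self A).1.eigenvectorUnitary :
        Matrix n n ℂ)).trace.re

/-- The operator norm (largest singular value) of a complex square matrix. -/
noncomputable def opNorm {n : Type*} [Fintype n] [DecidableEq n]
    (A : Matrix n n ℂ) : ℝ :=
  ‖LinearMap.toContinuousLinearMap (Matrix.toEuclideanLin A)‖

open NormedSpace

open scoped Matrix.Norms.L2Operator in
private lemma opNorm_eq_l2norm {d : ℕ} (M : Matrix (Fin d) (Fin d) ℂ) : opNorm M = ‖M‖ := rfl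


open NormedSpace
open scoped Matrix.Norms.L2Operator

private lemma trotter_alg {R : Type*} [Ring R] (w u v a b m : R)
    (ha : a * u = u * a) (hb : b * v = v * b) (hm : m * u = 1) :
    -(w * (a + b)) * (u * v) + w * ((u * a) * v + u * (v * b))
      = w * ((u * (b * m) - b) * (u * v)) := by
  have h1 : (u * (b * m) - b) * (u * v) = u * b * ((m * u) * v) - b * (u * v) := by noncomm_ring
  rw [h1, hm, one_mul, ← ha, ← hb]
  noncomm_ring

private lemma trotter_alg2 {R : Type*} [Ring R] (u a b m : R) (hm : m * (-a) = (-a) * m) :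
    (u * a) * (b * m) + u * (b * (m * (-a))) = u * ((a * b - b * a) * m) := by
  rw [hm]; noncomm_ring

open scoped Matrix.Norms.L2Operator in
private lemma trotter_key {d : ℕ} (A B : Matrix (Fin d) (Fin d) ℂ) (δ : ℝ)
    (hA : star A = -A) (hB : star B = -B) (hAn : ‖A‖ ≤ δ) (hBn : ‖B‖ ≤ δ) (hδ0 : 0 ≤ δ) :
    ‖exp (A + B) - exp A * exp B‖ ≤ δ ^ 2 := by
  let +nondep : NormedAlgebra ℚ (Matrix (Fin d) (Fin d) ℂ) := .restrictScalars ℚ ℂ _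
  -- unitarity of exponentials of real multiples of skew-adjoint elements
  have huni : ∀ (C : Matrix (Fin d) (Fin d) ℂ), star C = -C → ∀ t : ℝ,
      exp (t • C) ∈ unitary (Matrix (Fin d) (Fin d) ℂ) := by
    intro C hC t
    apply exp_mem_unitary_of_mem_skewAdjoint
    rw [skewAdjoint.mem_iff, ← smul_one_smul ℂ t C, star_smul, hC]
    simp
  set X : Matrix (Fin d) (Fin d) ℂ := A + B with hX
  have hXs : star X = -X := by rw [hX, star_add, hA, hB, neg_add]
  have hnA : star (-A) = -(-A) := by rw [star_neg, hA, neg_neg]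
  -- the four families of exponentials
  set u : ℝ → Matrix (Fin d) (Fin d) ℂ := fun s => exp (s • A) with hu
  set v : ℝ → Matrix (Fin d) (Fin d) ℂ := fun s => exp (s • B) with hv
  set m : ℝ → Matrix (Fin d) (Fin d) ℂ := fun s => exp (s • (-A)) with hm
  set w : ℝ → Matrix (Fin d) (Fin d) ℂ := fun s => exp ((1 - s) • X) with hw
  have hderiv : ∀ (C : Matrix (Fin d) (Fin d) ℂ) (t : ℝ),
      HasDerivAt (fun s : ℝ => exp (s • C)) (exp (t • C) * C) t := by
    intro C t
    have := hasDerivAt_exp_smul_const (𝕂 := ℝ) C t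
    exact this
  have hud : ∀ t, HasDerivAt u (u t * A) t := fun t => hderiv A t
  have hvd : ∀ t, HasDerivAt v (v t * B) t := fun t => hderiv B t
  have hmd : ∀ t, HasDerivAt m (m t * (-A)) t := fun t => hderiv (-A) t
  have hwd : ∀ t, HasDerivAt w (-(w t * X)) t := by
    intro t
    have h1 : HasDerivAt (fun s : ℝ => 1 - s) (-1 : ℝ) t := by
      simpa using (hasDerivAt_id t).const_sub 1
    have h2 := (hderiv X (1 - t)).scomp t h1
    exact h2.congr_deriv (by simp [hw, neg_smul])
  -- commutation facts
  have hcommA : ∀ t : ℝ, A * u t = u t * A := fun t =>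
    (((Commute.refl A).smul_right t).exp_right).eq
  have hcommB : ∀ t : ℝ, B * v t = v t * B := fun t =>
    (((Commute.refl B).smul_right t).exp_right).eq
  have hcommm : ∀ t : ℝ, m t * (-A) = (-A) * m t := fun t =>
    (((Commute.refl (-A)).smul_right t).exp_right).eq.symm
  have hmu : ∀ t : ℝ, m t * u t = 1 := by
    intro t
    rw [hm, hu]
    rw [← exp_add_of_commute (((Commute.refl A).neg_left).smul_left t |>.smul_right t)]
    rw [← smul_add, neg_add_cancel, smul_zero, exp_zero]
  -- norms of unitaries
  have hun : ∀ t : ℝ, ∀ C, ‖u t * C‖ = ‖C‖ := fun t C =>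
    CStarRing.norm_mem_unitary_mul C (huni A hA t)
  -- the interpolation function
  set G : ℝ → Matrix (Fin d) (Fin d) ℂ := fun s => w s * (u s * v s) with hG
  have hGd : ∀ s : ℝ, HasDerivAt G (w s * ((u s * (B * m s) - B) * (u s * v s))) s := by
    intro s
    have h := (hwd s).mul ((hud s).mul (hvd s))
    have heq := trotter_alg (w s) (u s) (v s) A B (m s) (hcommA s) (hcommB s) (hmu s)
    rw [hX] at h
    exact h.congr_deriv heq
  -- inner bound : ‖u s * (B * m s) - B‖ ≤ 2δ² s on [0,1]
  set K : ℝ → Matrix (Fin d) (Fin d) ℂ := fun s => u s * (B * m s) with hK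
  have hKd : ∀ s : ℝ, HasDerivAt K (u s * ((A * B - B * A) * m s)) s := by
    intro s
    have h := (hud s).mul ((hasDerivAt_const s B).mul (hmd s))
    refine h.congr_deriv ?_
    rw [← trotter_alg2 (u s) A B (m s) (hcommm s)]
    simp only [Pi.mul_apply]
    noncomm_ring
  have hK0 : K 0 = B := by
    simp [hK, hu, hm, exp_zero]
  have hKbound : ∀ s ∈ Set.Icc (0:ℝ) 1, ‖K s - B‖ ≤ 2 * δ ^ 2 * s := by
    have hC : ∀ t ∈ Set.Ico (0:ℝ) 1, ‖u t * ((A * B - B * A) * m t)‖ ≤ 2 * δ ^ 2 := by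
      intro t _
      rw [hun t]
      calc ‖(A * B - B * A) * m t‖ = ‖A * B - B * A‖ :=
            CStarRing.norm_mul_mem_unitary _ (huni (-A) hnA t)
        _ ≤ ‖A * B‖ + ‖B * A‖ := norm_sub_le _ _
        _ ≤ ‖A‖ * ‖B‖ + ‖B‖ * ‖A‖ := add_le_add (norm_mul_le _ _) (norm_mul_le _ _)
        _ ≤ δ * δ + δ * δ := by
            have h0A : 0 ≤ ‖A‖ := norm_nonneg _
            have h0B : 0 ≤ ‖B‖ := norm_nonneg _
            gcongr
        _ = 2 * δ ^ 2 := by ring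
    intro s hs
    have := norm_image_sub_le_of_norm_deriv_le_segment'
      (f := K) (f' := fun t => u t * ((A * B - B * A) * m t)) (a := 0) (b := 1)
      (fun t ht => (hKd t).hasDerivWithinAt) hC s hs
    rw [hK0] at this
    simpa using this
  -- outer bound via the fencing theorem
  have hmain : ‖G 1 - G 0‖ ≤ δ ^ 2 := by
    have hBd : ∀ x : ℝ, HasDerivAt (fun s : ℝ => δ ^ 2 * s ^ 2) (2 * δ ^ 2 * x) x := by
      intro x
      have := ((hasDerivAt_pow 2 x).const_mul (δ ^ 2))
      simpa [mul_comm, mul_assoc, mul_left_comm] using this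
    have h := image_norm_le_of_norm_deriv_right_le_deriv_boundary
      (f := fun s => G s - G 0)
      (f' := fun s => w s * ((u s * (B * m s) - B) * (u s * v s)))
      (a := 0) (b := 1)
      (B := fun s => δ ^ 2 * s ^ 2) (B' := fun s => 2 * δ ^ 2 * s)
      (fun s _ => ((hGd s).sub_const (G 0)).continuousAt.continuousWithinAt)
      (fun s _ => ((hGd s).sub_const (G 0)).hasDerivWithinAt)
      (by simp) hBd
      ?_ (by simp : (1:ℝ) ∈ Set.Icc (0:ℝ) 1)
    · simpa using h
    · intro x hx
      have hx' : x ∈ Set.Icc (0:ℝ) 1 := Set.Ico_subset_Icc_self hx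
      calc ‖w x * ((u x * (B * m x) - B) * (u x * v x))‖
          = ‖(u x * (B * m x) - B) * (u x * v x)‖ :=
            CStarRing.norm_mem_unitary_mul _ (huni X hXs (1 - x))
        _ = ‖u x * (B * m x) - B‖ :=
            CStarRing.norm_mul_mem_unitary _
              (mul_mem (huni A hA x) (huni B hB x))
        _ ≤ 2 * δ ^ 2 * x := hKbound x hx'
  -- identify endpoints
  have hG1 : G 1 = exp A * exp B := by
    simp [hG, hw, hu, hv, exp_zero]
  have hG0 : G 0 = exp X := by
    simp [hG, hw, hu, hv, exp_zero]
  rw [← hG0, ← hG1, ← norm_neg]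
  simpa using hmain

open scoped Matrix.Norms.L2Operator in
private lemma trotter_final {d : ℕ} (D J : Matrix (Fin d) (Fin d) ℂ)
    (hD : D.IsHermitian) (hJ : J.IsHermitian)
    (hDn : opNorm D ≤ 1) (hJn : opNorm J ≤ 1)
    (δ : ℝ) (hδ0 : 0 < δ) (hδ1 : δ ≤ 1) :
    opNorm (NormedSpace.exp ((-(Complex.I * (δ : ℂ))) • (D + J)) -
        NormedSpace.exp ((-(Complex.I * (δ : ℂ))) • D) *
          NormedSpace.exp ((-(Complex.I * (δ : ℂ))) • J))
      ≤ δ ^ 2 := by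
  rw [opNorm_eq_l2norm]
  rw [opNorm_eq_l2norm] at hDn hJn
  have hstar : ∀ (M : Matrix (Fin d) (Fin d) ℂ), M.IsHermitian →
      star ((-(Complex.I * (δ : ℂ))) • M) = -((-(Complex.I * (δ : ℂ))) • M) := by
    intro M hM
    have h1 : star (-(Complex.I * (δ : ℂ))) = Complex.I * δ := by simp
    rw [star_smul, Matrix.star_eq_conjTranspose, hM, h1, neg_smul, neg_neg]
  have hnorm : ∀ (M : Matrix (Fin d) (Fin d) ℂ), ‖M‖ ≤ 1 →
      ‖(-(Complex.I * (δ : ℂ))) • M‖ ≤ δ := by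
    intro M hM
    rw [norm_smul]
    have h2 : ‖-(Complex.I * (δ : ℂ))‖ = δ := by simp [abs_of_pos hδ0]
    rw [h2]
    nlinarith [norm_nonneg M]
  rw [smul_add]
  exact trotter_key _ _ δ (hstar D hD) (hstar J hJ) (hnorm D hDn) (hnorm J hJn) hδ0.le

/-- First-order Trotter error bound: for Hermitian `D,J` of operator norm at most 1 and
`0 < δ ≤ 1`, `‖e^{−i(D+J)δ} − e^{−iDδ}e^{−iJδ}‖ ≤ δ²`. -/
theorem trotter_error_bound {d : ℕ} (D J : Matrix (Fin d) (Fin d) ℂ)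
    (hD : D.IsHermitian) (hJ : J.IsHermitian)
    (hDn : opNorm D ≤ 1) (hJn : opNorm J ≤ 1)
    (δ : ℝ) (hδ0 : 0 < δ) (hδ1 : δ ≤ 1) :
    opNorm (NormedSpace.exp ((-(Complex.I * (δ : ℂ))) • (D + J)) -
        NormedSpace.exp ((-(Complex.I * (δ : ℂ))) • D) *
          NormedSpace.exp ((-(Complex.I * (δ : ℂ))) • J))
      ≤ δ ^ 2 :=
  trotter_final D J hD hJ hDn hJn δ hδ0 hδ1
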